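/- For every ε > 0 there exists m₀ such that the following holds for every integer m ≥ m₀ and every real R > 0. Let τ ∈ (0, R] satisfy: m·tanh²(τ/2) = 50·tanh²(2R)·(ln m + ln(ln(sinh(2R)/sinh τ))) in case R < m, and cosh²(τ/2) = m·ln(cosh(2R)) in case R ≥ m. Define Δ := m⁻⁴ · (∫₀^{2R} sinh^{m−1}(η) dη) / (∫₀^{τ} sinh^{m−1}(η) dη). Then | ln Δ − m·ln(√m·cosh(2R)) | ≤ ε·m·ln(√m·cosh(2R)). -/

import Mathlib

open Real intervalIntegral

lemma my_integral_cosh (a b : ℝ) : ∫ x in a..b, Real.cosh x = Real.sinh b - Real.sinh a :=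
  integral_eq_sub_of_hasDerivAt (fun x _ => Real.hasDerivAt_sinh x)
    (Real.continuous_cosh.intervalIntegrable a b)

lemma my_integral_sinh_pow (n : ℕ) (a : ℝ) :
    ∫ x in (0:ℝ)..a, Real.sinh x ^ n * Real.cosh x = Real.sinh a ^ (n+1) / (n+1) := by
  have h : ∀ x ∈ Set.uIcc (0:ℝ) a, HasDerivAt (fun y => Real.sinh y ^ (n+1) / (n+1))
      (Real.sinh x ^ n * Real.cosh x) x := by
    intro x _
    have := ((Real.hasDerivAt_sinh x).pow (n+1)).div_const ((n:ℝ)+1)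
    convert this using 1
    case e'_4 => rfl
    case e'_5 => rfl
    case e'_8 => rfl
    have hn : ((n:ℝ)+1) ≠ 0 := by positivity
    push_cast
    field_simp
  have := integral_eq_sub_of_hasDerivAt h
    (((Real.continuous_sinh.pow n).mul Real.continuous_cosh).intervalIntegrable 0 a)
  simpa using this

lemma intU (n : ℕ) (a : ℝ) (ha : 0 ≤ a) :
    (∫ η in (0:ℝ)..a, Real.sinh η ^ n) ≤ Real.sinh a ^ (n+1) := by
  have h1 : (∫ η in (0:ℝ)..a, Real.sinh η ^ n)
      ≤ ∫ η in (0:ℝ)..a, Real.sinh η ^ n * Real.cosh η := by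
    apply intervalIntegral.integral_mono_on ha
      ((Real.continuous_sinh.pow n).intervalIntegrable 0 a)
      (((Real.continuous_sinh.pow n).mul Real.continuous_cosh).intervalIntegrable 0 a)
    intro x hx
    have hs : 0 ≤ Real.sinh x ^ n := pow_nonneg (Real.sinh_nonneg_iff.2 hx.1) n
    simp only [Pi.mul_apply, Pi.pow_apply]
    nlinarith [Real.one_le_cosh x]
  rw [my_integral_sinh_pow] at h1
  have h2 : Real.sinh a ^ (n+1) / ((n:ℝ)+1) ≤ Real.sinh a ^ (n+1) := by
    apply div_le_self (pow_nonneg (Real.sinh_nonneg_iff.2 ha) _)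
    exact le_add_of_nonneg_left (Nat.cast_nonneg n)
  linarith

lemma sinh_le_mul_cosh (a : ℝ) (ha : 0 ≤ a) : Real.sinh a ≤ a * Real.cosh a := by
  have h1 : Real.sinh a = ∫ x in (0:ℝ)..a, Real.cosh x := by
    rw [my_integral_cosh]; simp
  have h2 : (∫ x in (0:ℝ)..a, Real.cosh x) ≤ ∫ _x in (0:ℝ)..a, Real.cosh a := by
    apply intervalIntegral.integral_mono_on ha
      (Real.continuous_cosh.intervalIntegrable 0 a)
      (intervalIntegrable_const)
    intro x hx
    rw [Real.cosh_le_cosh]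
    rw [abs_of_nonneg hx.1, abs_of_nonneg ha]
    exact hx.2
  rw [intervalIntegral.integral_const, smul_eq_mul] at h2
  simpa using h1.le.trans h2

lemma exp_neg_two_mul_le {u : ℝ} (h0 : 0 ≤ u) (h2 : u ≤ 1/2) : Real.exp (-(2*u)) ≤ 1 - u := by
  have hpos : 0 < 1 - u := by linarith
  have h3 := Real.log_le_sub_one_of_pos (inv_pos.2 hpos)
  rw [Real.log_inv] at h3
  have h4 : (1-u)⁻¹ - 1 ≤ 2*u := by
    rw [sub_le_iff_le_add, inv_le_iff_one_le_mul₀ hpos]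
    nlinarith
  have h5 : -(2*u) ≤ Real.log (1-u) := by linarith
  calc Real.exp (-(2*u)) ≤ Real.exp (Real.log (1-u)) := Real.exp_le_exp.2 h5
    _ = 1 - u := Real.exp_log hpos

lemma one_le_sinh_one : (1:ℝ) ≤ Real.sinh 1 := by
  rw [Real.sinh_eq]
  have h1 : (2.7182818283 : ℝ) < Real.exp 1 := Real.exp_one_gt_d9
  have h2 : Real.exp (-1 : ℝ) = (Real.exp 1)⁻¹ := by rw [Real.exp_neg]
  have h3 : (Real.exp 1)⁻¹ < 0.37 := by
    rw [inv_lt_iff_one_lt_mul₀ (by positivity)]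
    nlinarith
  rw [h2]
  nlinarith

lemma log_le_two_sqrt {x : ℝ} (hx : 1 ≤ x) : Real.log x ≤ 2 * Real.sqrt x := by
  have h0 : (0:ℝ) < x := by linarith
  have h1 : Real.log x = 2 * Real.log (Real.sqrt x) := by rw [Real.log_sqrt h0.le]; ring
  have h2 : Real.log (Real.sqrt x) ≤ Real.sqrt x - 1 :=
    Real.log_le_sub_one_of_pos (Real.sqrt_pos.2 h0)
  nlinarith [Real.sqrt_nonneg x]

lemma my_cosh_le_exp {x : ℝ} (hx : 0 ≤ x) : Real.cosh x ≤ Real.exp x := by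
  rw [Real.cosh_eq]
  have h := Real.exp_le_exp.2 (neg_le_self hx)
  linarith

lemma my_exp_div_two_le_cosh (x : ℝ) : Real.exp x / 2 ≤ Real.cosh x := by
  rw [Real.cosh_eq]; linarith [Real.exp_pos (-x)]

lemma my_log_fifty : Real.log 50 ≤ 4 := by
  have h1 : (50:ℝ) ≤ Real.exp 4 := by
    have h2 : Real.exp 4 = (Real.exp 1)^4 := by
      rw [← Real.exp_nat_mul]; norm_num
    have h3 : (2.7:ℝ)^4 ≤ (Real.exp 1)^4 :=
      pow_le_pow_left₀ (by norm_num) (by nlinarith [Real.exp_one_gt_d9]) 4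
    rw [h2]
    nlinarith [h3]
  calc Real.log 50 ≤ Real.log (Real.exp 4) := Real.log_le_log (by norm_num) h1
    _ = 4 := Real.log_exp 4

lemma intL (m : ℕ) (hm : 4 ≤ m) (a : ℝ) (ha : 0 < a) :
    Real.exp (-4) * (Real.sinh a / Real.cosh a / m) * Real.sinh a ^ (m-1)
      ≤ ∫ η in (0:ℝ)..a, Real.sinh η ^ (m-1) := by
  have hm' : (4:ℝ) ≤ (m:ℝ) := by exact_mod_cast hm
  have hmpos : (0:ℝ) < m := by linarith
  set δ : ℝ := min a 1 / m with hδdef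
  have hmin_pos : 0 < min a 1 := lt_min ha one_pos
  have hδpos : 0 < δ := div_pos hmin_pos hmpos
  have hδa : δ ≤ a := by
    rw [hδdef, div_le_iff₀ hmpos]
    nlinarith [min_le_left a 1]
  have hδ1 : δ * m ≤ 1 := by
    rw [hδdef, div_mul_cancel₀ _ (ne_of_gt hmpos)]
    exact min_le_right a 1
  have haδ : 0 ≤ a - δ := by linarith
  have hsa : 0 < Real.sinh a := Real.sinh_pos_iff.2 ha
  have hca : 0 < Real.cosh a := Real.cosh_pos a
  -- sinh a - sinh (a - δ) ≤ δ * cosh a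
  have hdiff : Real.sinh a - Real.sinh (a - δ) ≤ δ * Real.cosh a := by
    have h1 : Real.sinh a - Real.sinh (a - δ) = ∫ x in (a-δ)..a, Real.cosh x := by
      rw [my_integral_cosh]
    have h2 : (∫ x in (a-δ)..a, Real.cosh x) ≤ ∫ _x in (a-δ)..a, Real.cosh a := by
      apply intervalIntegral.integral_mono_on (by linarith)
        (Real.continuous_cosh.intervalIntegrable _ _) intervalIntegrable_const
      intro x hx
      rw [Real.cosh_le_cosh, abs_of_nonneg (le_trans haδ hx.1), abs_of_nonneg ha.le]
      exact hx.2
    rw [intervalIntegral.integral_const, smul_eq_mul] at h2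
    rw [h1]
    calc (∫ x in (a-δ)..a, Real.cosh x) ≤ (a - (a-δ)) * Real.cosh a := h2
      _ = δ * Real.cosh a := by ring
  -- δ * exp(-a) ≤ (1/m) * sinh a
  have hkey : δ * Real.exp (-a) ≤ (1/m) * Real.sinh a := by
    have : min a 1 * Real.exp (-a) ≤ Real.sinh a := by
      rcases le_total a 1 with h | h
      · rw [min_eq_left h]
        have h1 : Real.exp (-a) ≤ 1 := Real.exp_le_one_iff.2 (by linarith)
        nlinarith [Real.self_lt_sinh_iff.2 ha]
      · rw [min_eq_right h]
        have h1 : Real.exp (-a) ≤ 1 := Real.exp_le_one_iff.2 (by linarith)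
        have h2 : Real.sinh 1 ≤ Real.sinh a := Real.sinh_le_sinh.2 h
        nlinarith [one_le_sinh_one]
    calc δ * Real.exp (-a) = (min a 1 * Real.exp (-a)) / m := by rw [hδdef]; ring
      _ ≤ Real.sinh a / m := by gcongr
      _ = (1/m) * Real.sinh a := by ring
  -- sinh(a - δ) ≥ (1 - 2/m) sinh a
  have hlow : (1 - 2/m) * Real.sinh a ≤ Real.sinh (a - δ) := by
    have hcsh : Real.cosh a = Real.sinh a + Real.exp (-a) := by
      have := Real.cosh_sub_sinh a; linarith
    have hδm : δ ≤ 1/m := by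
      rw [hδdef]; gcongr
      exact min_le_right a 1
    have hδs : δ * Real.sinh a ≤ (1/m) * Real.sinh a :=
      mul_le_mul_of_nonneg_right hδm hsa.le
    have hsplit : δ * Real.cosh a = δ * Real.sinh a + δ * Real.exp (-a) := by
      rw [hcsh]; ring
    calc (1 - 2/(m:ℝ)) * Real.sinh a
        = Real.sinh a - (1/m) * Real.sinh a - (1/m) * Real.sinh a := by ring
      _ ≤ Real.sinh a - δ * Real.sinh a - δ * Real.exp (-a) := by linarith
      _ = Real.sinh a - δ * Real.cosh a := by rw [hsplit]; ring
      _ ≤ Real.sinh (a - δ) := by linarith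
  -- main chain
  have h2m : 0 ≤ 1 - 2/(m:ℝ) := by
    rw [sub_nonneg, div_le_one hmpos]; linarith
  have hsaδ : 0 ≤ Real.sinh (a - δ) := Real.sinh_nonneg_iff.2 haδ
  have hconst : Real.exp (-4) ≤ (1 - 2/(m:ℝ))^(m-1) := by
    have hu : Real.exp (-(2*(2/(m:ℝ)))) ≤ 1 - 2/(m:ℝ) :=
      exp_neg_two_mul_le (by positivity) (by rw [div_le_div_iff₀ hmpos (by norm_num)]; linarith)
    have hp : Real.exp (-(2*(2/(m:ℝ))))^(m-1) ≤ (1 - 2/(m:ℝ))^(m-1) :=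
      pow_le_pow_left₀ (Real.exp_nonneg _) hu _
    have hcast : ((m-1:ℕ):ℝ) = (m:ℝ) - 1 := by
      have : 1 ≤ m := by omega
      push_cast [Nat.cast_sub this]; ring
    have heq : Real.exp (-(2*(2/(m:ℝ))))^(m-1) = Real.exp (((m:ℝ)-1) * (-(4/(m:ℝ)))) := by
      rw [← Real.exp_nat_mul, hcast]; ring_nf
    have hle : Real.exp (-4:ℝ) ≤ Real.exp (((m:ℝ)-1) * (-(4/(m:ℝ)))) := by
      apply Real.exp_le_exp.2
      rw [neg_le, ← neg_mul_comm]
      have h4 : ((m:ℝ)-1) * (4/(m:ℝ)) ≤ 4 := by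
        rw [← mul_div_assoc, div_le_iff₀ hmpos]
        nlinarith
      linarith
    calc Real.exp (-4:ℝ) ≤ Real.exp (((m:ℝ)-1) * (-(4/(m:ℝ)))) := hle
      _ = Real.exp (-(2*(2/(m:ℝ))))^(m-1) := heq.symm
      _ ≤ (1 - 2/(m:ℝ))^(m-1) := hp
  have hδge : Real.sinh a / Real.cosh a / m ≤ δ := by
    rw [hδdef]
    gcongr
    apply le_min
    · rw [div_le_iff₀ hca]
      exact sinh_le_mul_cosh a ha.le
    · rw [div_le_one hca]
      nlinarith [Real.cosh_sub_sinh a, Real.exp_pos (-a)]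
  have hX : (0:ℝ) ≤ Real.sinh a ^ (m-1) := pow_nonneg hsa.le _
  -- integral lower bound
  have hint1 : IntervalIntegrable (fun η => Real.sinh η ^ (m-1)) MeasureTheory.volume 0 (a-δ) :=
    (Real.continuous_sinh.pow _).intervalIntegrable _ _
  have hint2 : IntervalIntegrable (fun η => Real.sinh η ^ (m-1)) MeasureTheory.volume (a-δ) a :=
    (Real.continuous_sinh.pow _).intervalIntegrable _ _
  have hsplit2 : (∫ η in (0:ℝ)..a, Real.sinh η ^ (m-1))
      = (∫ η in (0:ℝ)..(a-δ), Real.sinh η ^ (m-1)) + ∫ η in (a-δ)..a, Real.sinh η ^ (m-1) :=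
    (intervalIntegral.integral_add_adjacent_intervals hint1 hint2).symm
  have hfirst : 0 ≤ ∫ η in (0:ℝ)..(a-δ), Real.sinh η ^ (m-1) := by
    apply intervalIntegral.integral_nonneg haδ
    intro u hu
    exact pow_nonneg (Real.sinh_nonneg_iff.2 hu.1) _
  have hsecond : δ * Real.sinh (a-δ) ^ (m-1) ≤ ∫ η in (a-δ)..a, Real.sinh η ^ (m-1) := by
    have := intervalIntegral.integral_mono_on (by linarith : a - δ ≤ a)
      (intervalIntegrable_const : IntervalIntegrable (fun _ => Real.sinh (a-δ) ^ (m-1)) MeasureTheory.volume (a-δ) a)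
      hint2 (fun x hx => by
        apply pow_le_pow_left₀ hsaδ
        exact Real.sinh_le_sinh.2 hx.1)
    rw [intervalIntegral.integral_const, smul_eq_mul] at this
    calc δ * Real.sinh (a-δ) ^ (m-1) = (a - (a - δ)) * Real.sinh (a-δ) ^ (m-1) := by ring
      _ ≤ _ := this
  -- combine
  have hchain : Real.exp (-4) * (Real.sinh a / Real.cosh a / m) * Real.sinh a ^ (m-1)
      ≤ δ * Real.sinh (a-δ) ^ (m-1) := by
    have h1 : Real.exp (-4) * (Real.sinh a / Real.cosh a / m) ≤ (1 - 2/(m:ℝ))^(m-1) * δ :=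
      mul_le_mul hconst hδge (by positivity) (pow_nonneg h2m _)
    have h2 : (1 - 2/(m:ℝ))^(m-1) * δ * Real.sinh a ^ (m-1) = δ * (((1 - 2/(m:ℝ)) * Real.sinh a) ^ (m-1)) := by
      rw [mul_pow]; ring
    have h3 : ((1 - 2/(m:ℝ)) * Real.sinh a) ^ (m-1) ≤ Real.sinh (a-δ) ^ (m-1) :=
      pow_le_pow_left₀ (by positivity) hlow _
    calc Real.exp (-4) * (Real.sinh a / Real.cosh a / m) * Real.sinh a ^ (m-1)
        ≤ (1 - 2/(m:ℝ))^(m-1) * δ * Real.sinh a ^ (m-1) :=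
          mul_le_mul_of_nonneg_right h1 hX
      _ = δ * (((1 - 2/(m:ℝ)) * Real.sinh a) ^ (m-1)) := h2
      _ ≤ δ * Real.sinh (a-δ) ^ (m-1) := mul_le_mul_of_nonneg_left h3 hδpos.le
  linarith [hsplit2, hfirst, hsecond, hchain]

set_option maxHeartbeats 4000000 in
theorem stmt_11 :
    ∀ ε : ℝ, 0 < ε → ∃ m₀ : ℕ, ∀ m : ℕ, m₀ ≤ m → ∀ R : ℝ, 0 < R →
      ∀ τ : ℝ, τ ∈ Set.Ioc 0 R →
        (R < (m : ℝ) →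
          (m : ℝ) * Real.tanh (τ / 2) ^ 2
            = 50 * Real.tanh (2 * R) ^ 2 *
                (Real.log m + Real.log (Real.log (Real.sinh (2 * R) / Real.sinh τ)))) →
        ((m : ℝ) ≤ R →
          Real.cosh (τ / 2) ^ 2 = (m : ℝ) * Real.log (Real.cosh (2 * R))) →
        |Real.log ((m : ℝ)⁻¹ ^ 4 *
              ((∫ η in (0:ℝ)..(2 * R), Real.sinh η ^ (m - 1)) /
                (∫ η in (0:ℝ)..τ, Real.sinh η ^ (m - 1))))
            - (m : ℝ) * Real.log (Real.sqrt m * Real.cosh (2 * R))|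
          ≤ ε * ((m : ℝ) * Real.log (Real.sqrt m * Real.cosh (2 * R))) := by
  intro ε hε
  set ε' : ℝ := min ε 1 with hε'def
  have hε'pos : 0 < ε' := lt_min hε one_pos
  have hε'le1 : ε' ≤ 1 := min_le_right ε 1
  have hε'leε : ε' ≤ ε := min_le_left ε 1
  refine ⟨⌈Real.exp ((200/ε')^2)⌉₊ + 4, ?_⟩
  intro m hm R hR τ hτmem h1 h2
  obtain ⟨hτ0, hτR⟩ := hτmem
  -- basic facts about m
  have hA1 : (200:ℝ) ≤ 200/ε' := by
    rw [le_div_iff₀ hε'pos]; nlinarith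
  have hA2 : (40000:ℝ) ≤ (200/ε')^2 := by nlinarith
  have hmR : Real.exp ((200/ε')^2) ≤ (m:ℝ) := by
    have hc := Nat.le_ceil (Real.exp ((200/ε')^2))
    have hc2 : (⌈Real.exp ((200/ε')^2)⌉₊ : ℝ) ≤ (m:ℝ) := by
      have : ⌈Real.exp ((200/ε')^2)⌉₊ ≤ m := le_trans (Nat.le_add_right _ 4) hm
      exact_mod_cast this
    linarith
  have hm4 : 4 ≤ m := le_trans (Nat.le_add_left 4 _) hm
  have hm1 : 1 ≤ m := by omega
  have hmpos : (0:ℝ) < m := by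
    have : (0:ℕ) < m := by omega
    exact_mod_cast this
  set lm : ℝ := Real.log m with hlmdef
  have hlm : (200/ε')^2 ≤ lm := by
    rw [hlmdef, ← Real.log_exp ((200/ε')^2)]
    exact Real.log_le_log (Real.exp_pos _) hmR
  have hlm4 : (40000:ℝ) ≤ lm := le_trans hA2 hlm
  have hsqlm : 200/ε' ≤ Real.sqrt lm := by
    have := Real.sqrt_le_sqrt hlm
    rwa [Real.sqrt_sq (by positivity)] at this
  have hexpple : ∀ x : ℝ, x ≤ Real.exp x := fun x => by linarith [Real.add_one_le_exp x]
  have hm_big : (200/ε')^2 ≤ (m:ℝ) := le_trans (hexpple _) hmR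
  have hsqm : 200/ε' ≤ Real.sqrt m := by
    have := Real.sqrt_le_sqrt hm_big
    rwa [Real.sqrt_sq (by positivity)] at this
  have hm_huge : (20001:ℝ)^2 ≤ (m:ℝ) := by
    have h1' : Real.exp (40000:ℝ) ≤ (m:ℝ) := le_trans (Real.exp_le_exp.2 hA2) hmR
    have h2' : Real.exp (40000:ℝ) = Real.exp 20000 ^ 2 := by
      rw [← Real.exp_nat_mul]; norm_num
    have h3' : (20001:ℝ) ≤ Real.exp 20000 := by linarith [Real.add_one_le_exp (20000:ℝ)]
    nlinarith [Real.exp_pos (20000:ℝ)]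
  have hεm : (40000:ℝ) ≤ ε' * m := by
    have : ε' * ((200/ε')^2) = 40000/ε' := by field_simp; ring
    nlinarith [mul_le_mul_of_nonneg_left hm_big hε'pos.le,
      (by rw [le_div_iff₀ hε'pos]; nlinarith : (40000:ℝ) ≤ 40000/ε')]
  -- main quantities
  set C2 : ℝ := Real.cosh (2*R) with hC2def
  set s2 : ℝ := Real.sinh (2*R) with hs2def
  set sτ : ℝ := Real.sinh τ with hsτdef
  set cτ : ℝ := Real.cosh τ with hcτdef
  have hR2 : (0:ℝ) < 2*R := by linarith
  have hs2pos : 0 < s2 := Real.sinh_pos_iff.2 hR2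
  have hsτpos : 0 < sτ := Real.sinh_pos_iff.2 hτ0
  have hC2pos : 0 < C2 := Real.cosh_pos (2*R)
  have hC2ge1 : 1 ≤ C2 := Real.one_le_cosh (2*R)
  have hcτpos : 0 < cτ := Real.cosh_pos τ
  set L : ℝ := Real.log (Real.sqrt m * C2) with hLdef0
  set S : ℝ := Real.log s2 - Real.log sτ with hSdef
  clear_value lm C2 s2 sτ cτ L S
  have hsqmpos : (0:ℝ) < Real.sqrt m := Real.sqrt_pos.2 hmpos
  have hL_id : L = lm/2 + Real.log C2 := by
    rw [hLdef0, Real.log_mul (ne_of_gt hsqmpos) (ne_of_gt hC2pos),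
      Real.log_sqrt (Nat.cast_nonneg m), hlmdef]
  have hlogC2_nonneg : 0 ≤ Real.log C2 := Real.log_nonneg hC2ge1
  have hL_ge : lm/2 ≤ L := by rw [hL_id]; linarith
  have hLpos : 0 < L := by linarith
  -- integrals
  set Iτ : ℝ := ∫ η in (0:ℝ)..τ, Real.sinh η ^ (m-1) with hIτdef
  set I2 : ℝ := ∫ η in (0:ℝ)..(2*R), Real.sinh η ^ (m-1) with hI2def
  clear_value Iτ I2
  have hIτ_low := intL m hm4 τ hτ0
  have hI2_low := intL m hm4 (2*R) hR2
  rw [← hsτdef, ← hcτdef, ← hIτdef] at hIτ_low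
  rw [← hs2def, ← hC2def, ← hI2def] at hI2_low
  have hIτpos : 0 < Iτ :=
    lt_of_lt_of_le (by positivity) hIτ_low
  have hI2pos : 0 < I2 :=
    lt_of_lt_of_le (by positivity) hI2_low
  have hcastm : ((m-1:ℕ):ℝ) = (m:ℝ) - 1 := by
    push_cast [Nat.cast_sub hm1]; ring
  -- log bounds on the integrals
  have hIτ_up : Real.log Iτ ≤ (m:ℝ) * Real.log sτ := by
    have h := intU (m-1) τ hτ0.le
    rw [← hsτdef, ← hIτdef] at h
    have hmm : m - 1 + 1 = m := by omega
    rw [hmm] at h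
    calc Real.log Iτ ≤ Real.log (sτ ^ m) := Real.log_le_log hIτpos h
      _ = (m:ℝ) * Real.log sτ := by rw [Real.log_pow]
  have hI2_up : Real.log I2 ≤ (m:ℝ) * Real.log s2 := by
    have h := intU (m-1) (2*R) hR2.le
    rw [← hs2def, ← hI2def] at h
    have hmm : m - 1 + 1 = m := by omega
    rw [hmm] at h
    calc Real.log I2 ≤ Real.log (s2 ^ m) := Real.log_le_log hI2pos h
      _ = (m:ℝ) * Real.log s2 := by rw [Real.log_pow]
  have hlog_lower : ∀ s c J : ℝ, 0 < s → 0 < c → 0 < J →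
      Real.exp (-4) * (s / c / m) * s ^ (m-1) ≤ J →
      (m:ℝ) * Real.log s - Real.log c - lm - 4 ≤ Real.log J := by
    intro s c J hs hc hJ hle
    have hpos : (0:ℝ) < Real.exp (-4) * (s / c / m) * s ^ (m-1) := by positivity
    have h := Real.log_le_log hpos hle
    have hne1 : Real.exp (-4:ℝ) ≠ 0 := ne_of_gt (Real.exp_pos _)
    have hne2 : s / c / (m:ℝ) ≠ 0 := by positivity
    have hne3 : s ^ (m-1) ≠ 0 := by positivity
    have hne4 : s / c ≠ 0 := by positivity
    have heq : Real.log (Real.exp (-4) * (s / c / m) * s ^ (m-1))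
        = -4 + (Real.log s - Real.log c - Real.log m) + ((m:ℝ)-1) * Real.log s := by
      rw [Real.log_mul (mul_ne_zero hne1 hne2) hne3, Real.log_mul hne1 hne2,
        Real.log_exp, Real.log_div hne4 (ne_of_gt hmpos),
        Real.log_div (ne_of_gt hs) (ne_of_gt hc), Real.log_pow, hcastm]
    rw [heq, ← hlmdef] at h
    linarith only [h]
  have hIτ_lowlog : (m:ℝ) * Real.log sτ - Real.log cτ - lm - 4 ≤ Real.log Iτ :=
    hlog_lower sτ cτ Iτ hsτpos hcτpos hIτpos hIτ_low
  have hI2_lowlog : (m:ℝ) * Real.log s2 - Real.log C2 - lm - 4 ≤ Real.log I2 :=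
    hlog_lower s2 C2 I2 hs2pos hC2pos hI2pos hI2_low
  -- K bounds
  set K : ℝ := Real.log I2 - Real.log Iτ with hKdef
  clear_value K
  have hlogcτ_le : Real.log cτ ≤ Real.log C2 := by
    apply Real.log_le_log hcτpos
    rw [hcτdef, hC2def, Real.cosh_le_cosh, abs_of_nonneg hτ0.le, abs_of_nonneg hR2.le]
    linarith
  have hKu : K ≤ (m:ℝ)*S + L + lm + 4 := by
    have hcL : Real.log cτ ≤ L := by rw [hL_id]; linarith only [hlm4, hlogcτ_le]
    rw [hKdef, hSdef]
    linarith only [hI2_up, hIτ_lowlog, hcL]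
  have hKl : (m:ℝ)*S - L - lm - 4 ≤ K := by
    have hcL : Real.log C2 ≤ L := by rw [hL_id]; linarith only [hlm4]
    rw [hKdef, hSdef]
    linarith only [hIτ_up, hI2_lowlog, hcL]
  -- rewrite the goal
  have hgoal_eq : Real.log ((m:ℝ)⁻¹ ^ 4 * (I2 / Iτ)) = -(4*lm) + K := by
    rw [Real.log_mul (by positivity) (by positivity),
      Real.log_div (ne_of_gt hI2pos) (ne_of_gt hIτpos),
      Real.log_pow, Real.log_inv, hKdef, ← hlmdef]
    push_cast
    ring
  -- the crucial bound |S - L| ≤ ε'/2 * L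
  have hlog2le1 : Real.log 2 ≤ 1 := by
    have h := Real.log_le_sub_one_of_pos (by norm_num : (0:ℝ) < 2)
    linarith only [h]
  have hlog4le2 : Real.log 4 ≤ 2 := by
    have h : (4:ℝ) = 2^2 := by norm_num
    rw [h, Real.log_pow]
    push_cast
    linarith only [hlog2le1]
  have hlmlem : lm ≤ (m:ℝ) := by
    have h := Real.log_le_sub_one_of_pos hmpos
    rw [← hlmdef] at h
    linarith only [h]
  have hlogC2le : Real.log C2 ≤ 2*R := by
    have h1' : C2 ≤ Real.exp (2*R) := by
      rw [hC2def]; exact my_cosh_le_exp hR2.le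
    have h2' := Real.log_le_log hC2pos h1'
    rwa [Real.log_exp] at h2'
  have hSL : |S - L| ≤ ε'/2 * L := by
    rcases lt_or_ge R (m:ℝ) with hcase | hcase
    · -- Case R < m
      have heq := h1 hcase
      set t : ℝ := Real.tanh (τ/2) with htdef
      set T : ℝ := Real.tanh (2*R) with hTdef
      have hlogdiv : Real.log (s2 / sτ) = S := by
        rw [hSdef, Real.log_div (ne_of_gt hs2pos) (ne_of_gt hsτpos)]
      rw [hlogdiv] at heq
      have hshτ2pos : (0:ℝ) < Real.sinh (τ/2) := Real.sinh_pos_iff.2 (by linarith)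
      have hchτ2pos : (0:ℝ) < Real.cosh (τ/2) := Real.cosh_pos _
      have htpos : 0 < t := by
        rw [htdef, Real.tanh_eq_sinh_div_cosh]; positivity
      have ht1 : t < 1 := by
        rw [htdef, Real.tanh_eq_sinh_div_cosh, div_lt_one (Real.cosh_pos _)]
        linarith only [Real.cosh_sub_sinh (τ/2), Real.exp_pos (-(τ/2))]
      have hsh2Rpos : (0:ℝ) < Real.sinh (2*R) := Real.sinh_pos_iff.2 hR2
      have hTpos : 0 < T := by
        rw [hTdef, Real.tanh_eq_sinh_div_cosh]; positivity
      have hT1 : T < 1 := by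
        rw [hTdef, Real.tanh_eq_sinh_div_cosh, div_lt_one (Real.cosh_pos _)]
        linarith only [Real.cosh_sub_sinh (2*R), Real.exp_pos (-(2*R))]
      have hsinh_half : Real.sinh (τ/2) = t * Real.cosh (τ/2) := by
        rw [htdef, Real.tanh_eq_sinh_div_cosh]
        field_simp
      have hs2_id : s2 = T * C2 := by
        rw [hs2def, hC2def, hTdef, Real.tanh_eq_sinh_div_cosh]
        field_simp
      clear_value t T
      set W : ℝ := lm + Real.log S with hWdef
      clear_value W
      -- S ≥ log 2
      have hs2_2sτ : 2 * sτ ≤ s2 := by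
        rw [hs2def, hsτdef]
        have h2m : Real.sinh (2*R) = 2 * Real.sinh R * Real.cosh R := Real.sinh_two_mul R
        have hsR : Real.sinh τ ≤ Real.sinh R := Real.sinh_le_sinh.2 hτR
        have hmul : Real.sinh R ≤ Real.sinh R * Real.cosh R :=
          le_mul_of_one_le_right (Real.sinh_nonneg_iff.2 hR.le) (Real.one_le_cosh R)
        rw [h2m]
        linarith only [hsR, hmul]
      have hSlog2 : Real.log 2 ≤ S := by
        have h := Real.log_le_log (by positivity : (0:ℝ) < 2*sτ) hs2_2sτ
        rw [Real.log_mul (by norm_num) (ne_of_gt hsτpos)] at h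
        rw [hSdef]
        linarith only [h]
      have hSpos : 0 < S := lt_of_lt_of_le (Real.log_pos (by norm_num)) hSlog2
      have hlog2half : (1/2:ℝ) ≤ Real.log 2 := by linarith only [Real.log_two_gt_d9]
      have hlogSlb : -1 ≤ Real.log S := by
        have h := Real.log_le_log (by norm_num : (0:ℝ) < 1/2) (le_trans hlog2half hSlog2)
        rw [one_div, Real.log_inv] at h
        linarith only [h, hlog2le1]
      have hWlb : lm - 1 ≤ W := by rw [hWdef]; linarith only [hlogSlb]
      have hW1 : 1 ≤ W := by linarith only [hWlb, hlm4]
      have hWpos : 0 < W := by linarith only [hW1]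
      have hlogWnn : 0 ≤ Real.log W := Real.log_nonneg hW1
      -- equation: t^2 = 50*T^2*W/m
      have ht2eq : t^2 = 50*T^2*W / m := by
        rw [eq_div_iff (ne_of_gt hmpos)]
        linarith only [heq]
      have hlt : 2 * Real.log t = Real.log 50 + 2*Real.log T + Real.log W - lm := by
        have hT2pos : (0:ℝ) < T^2 := pow_pos hTpos 2
        have h50T : (0:ℝ) < 50*T^2 := by linarith only [hT2pos]
        have hnum : (0:ℝ) < 50*T^2*W := mul_pos h50T hWpos
        have h : Real.log (t^2) = Real.log (50*T^2*W) - Real.log m := by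
          rw [ht2eq, Real.log_div (ne_of_gt hnum) (ne_of_gt hmpos)]
        rw [Real.log_mul (ne_of_gt h50T) (ne_of_gt hWpos),
          Real.log_mul (by norm_num) (ne_of_gt hT2pos),
          Real.log_pow, Real.log_pow, ← hlmdef] at h
        push_cast at h
        linarith only [h]
      -- identities
      have hsτ_id : sτ = 2 * t * Real.cosh (τ/2)^2 := by
        rw [hsτdef]
        have h := Real.sinh_two_mul (τ/2)
        have h2t : 2*(τ/2) = τ := by ring
        rw [h2t] at h
        rw [h, hsinh_half]; ring
      have hc2_id : Real.cosh (τ/2)^2 * (1 - t^2) = 1 := by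
        have h := Real.cosh_sq_sub_sinh_sq (τ/2)
        rw [hsinh_half] at h
        linear_combination h
      have hc2ge1 : 1 ≤ Real.cosh (τ/2)^2 := by nlinarith only [Real.one_le_cosh (τ/2)]
      have hc2pos : (0:ℝ) < Real.cosh (τ/2)^2 := by positivity
      have hlogc2nn : 0 ≤ Real.log (Real.cosh (τ/2)^2) := Real.log_nonneg hc2ge1
      have hS_id : S = Real.log T + Real.log C2 - Real.log 2 - Real.log t
          - Real.log (Real.cosh (τ/2)^2) := by
        have hA : Real.log s2 = Real.log T + Real.log C2 := by
          rw [hs2_id, Real.log_mul (ne_of_gt hTpos) (ne_of_gt hC2pos)]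
        have hB : Real.log sτ = Real.log 2 + Real.log t + Real.log (Real.cosh (τ/2)^2) := by
          rw [hsτ_id, Real.log_mul (by positivity) (ne_of_gt hc2pos),
            Real.log_mul (by norm_num) (ne_of_gt htpos)]
        rw [hSdef]
        linarith only [hA, hB]
      have hLS : L - S = Real.log 2 + Real.log 50/2 + Real.log W/2
          + Real.log (Real.cosh (τ/2)^2) := by
        linarith only [hS_id, hlt, hL_id]
      have hlog50nn : (0:ℝ) ≤ Real.log 50 := Real.log_nonneg (by norm_num)
      have hSleL : S ≤ L := by
        linarith only [hLS, hlogWnn, hlogc2nn, hlog50nn, hlog2half]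
      -- W upper bound
      have hLle3m : L ≤ 3*(m:ℝ) := by
        linarith only [hL_id, hlogC2le, hlmlem, hcase]
      have hlogS_le : Real.log S ≤ lm + 2 := by
        have h1' : Real.log S ≤ Real.log L := Real.log_le_log hSpos hSleL
        have h2' : Real.log L ≤ Real.log (3*(m:ℝ)) := Real.log_le_log hLpos hLle3m
        have h3' : Real.log (3*(m:ℝ)) = Real.log 3 + lm := by
          rw [Real.log_mul (by norm_num) (ne_of_gt hmpos), ← hlmdef]
        have h4' : Real.log 3 ≤ 2 := by
          have h := Real.log_le_sub_one_of_pos (by norm_num : (0:ℝ) < 3)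
          linarith only [h]
        linarith only [h1', h2', h3', h4']
      have hWle : W ≤ 2*lm + 2 := by rw [hWdef]; linarith only [hlogS_le]
      have hT2le1 : T^2 ≤ 1 := by nlinarith only [hTpos, hT1]
      have hsqm_ge : (20001:ℝ) ≤ Real.sqrt m := by
        have h := Real.sqrt_le_sqrt hm_huge
        rwa [Real.sqrt_sq (by norm_num : (0:ℝ) ≤ 20001)] at h
      have hlm_le_sq : lm ≤ 2*Real.sqrt m := by
        have h := log_le_two_sqrt (by exact_mod_cast hm1 : (1:ℝ) ≤ (m:ℝ))
        rw [← hlmdef] at h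
        exact h
      have hmsq : (m:ℝ) = Real.sqrt m * Real.sqrt m :=
        (Real.mul_self_sqrt (Nat.cast_nonneg m)).symm
      have hmbig : 200*lm + 200 ≤ (m:ℝ) := by
        nlinarith only [hlm_le_sq, hsqm_ge, hmsq, Real.sqrt_nonneg (m:ℝ)]
      have ht2le : t^2 ≤ 1/2 := by
        have h1' : t^2*(m:ℝ) ≤ 50*W := by
          rw [ht2eq, div_mul_cancel₀ _ (ne_of_gt hmpos)]
          nlinarith only [hWpos, hT2le1]
        have h2' : 50*W ≤ 100*lm + 100 := by linarith only [hWle]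
        nlinarith only [h1', h2', hmbig, hmpos, sq_nonneg t]
      have hc2inv : Real.cosh (τ/2)^2 = (1 - t^2)⁻¹ :=
        eq_inv_of_mul_eq_one_right (by linear_combination hc2_id)
      have hlogc2le : Real.log (Real.cosh (τ/2)^2) ≤ 1 := by
        have h1t2 : 0 < 1 - t^2 := by linarith only [ht2le]
        have hexp := exp_neg_two_mul_le (sq_nonneg t) ht2le
        have hlog1t2 : -(2*t^2) ≤ Real.log (1-t^2) := by
          calc -(2*t^2) = Real.log (Real.exp (-(2*t^2))) := (Real.log_exp _).symm
            _ ≤ Real.log (1-t^2) := Real.log_le_log (Real.exp_pos _) hexp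
        rw [hc2inv, Real.log_inv]
        linarith only [hlog1t2, ht2le]
      have hlogWle : Real.log W ≤ 3 + 2*Real.sqrt lm := by
        have h1' : Real.log W ≤ Real.log (4*lm) :=
          Real.log_le_log hWpos (by linarith only [hWle, hlm4])
        have h2' : Real.log (4*lm) = Real.log 4 + Real.log lm :=
          Real.log_mul (by norm_num) (ne_of_gt (by linarith only [hlm4] : (0:ℝ) < lm))
        have h4' : Real.log lm ≤ 2*Real.sqrt lm := log_le_two_sqrt (by linarith only [hlm4])
        linarith only [h1', h2', h4', hlog4le2]
      have hsqlm200 : (200:ℝ) ≤ Real.sqrt lm := le_trans hA1 hsqlm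
      have hδle : L - S ≤ 2*Real.sqrt lm := by
        linarith only [hLS, hlog2le1, my_log_fifty, hlogWle, hlogc2le, hsqlm200]
      rw [abs_sub_comm, abs_of_nonneg (by linarith only [hSleL] : (0:ℝ) ≤ L - S)]
      have hq : 200 ≤ ε' * Real.sqrt lm := by
        rw [div_le_iff₀ hε'pos] at hsqlm
        linarith only [hsqlm]
      have hlmsq : lm = Real.sqrt lm * Real.sqrt lm :=
        (Real.mul_self_sqrt (by linarith only [hlm4])).symm
      have hp1 : 200 * Real.sqrt lm ≤ ε' * lm := by
        have h := mul_le_mul_of_nonneg_right hq (Real.sqrt_nonneg lm)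
        calc 200 * Real.sqrt lm ≤ ε' * Real.sqrt lm * Real.sqrt lm := h
          _ = ε' * (Real.sqrt lm * Real.sqrt lm) := by ring
          _ = ε' * lm := by rw [← hlmsq]
      have hp2 : ε' * (lm/2) ≤ ε' * L := mul_le_mul_of_nonneg_left hL_ge hε'pos.le
      linarith only [hδle, hp1, hp2, hsqlm200]
    · -- Case m ≤ R
      have heq := h2 hcase
      have hm4real : (4:ℝ) ≤ (m:ℝ) := by exact_mod_cast hm4
      have hR4 : (4:ℝ) ≤ R := le_trans hm4real hcase
      have hP_lo : 2*R - 1 ≤ Real.log C2 := by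
        have h1' : Real.exp (2*R) / 2 ≤ C2 := by
          rw [hC2def]; exact my_exp_div_two_le_cosh (2*R)
        have h2' := Real.log_le_log (by positivity) h1'
        rw [Real.log_div (by positivity) (by norm_num), Real.log_exp] at h2'
        linarith only [h2', hlog2le1]
      have hcosτ : cτ = 2*((m:ℝ) * Real.log C2) - 1 := by
        rw [hcτdef]
        have h := Real.cosh_two_mul (τ/2)
        have h2t : 2*(τ/2) = τ := by ring
        rw [h2t] at h
        have h3 := Real.cosh_sq_sub_sinh_sq (τ/2)
        rw [← heq]
        linarith only [h, h3]
      have hmP_lo : (m:ℝ)*(2*R-1) ≤ (m:ℝ)*Real.log C2 :=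
        mul_le_mul_of_nonneg_left hP_lo hmpos.le
      have hmP_up : (m:ℝ)*Real.log C2 ≤ (m:ℝ)*(2*R) :=
        mul_le_mul_of_nonneg_left hlogC2le hmpos.le
      have hcτ_lo : 2*(m:ℝ)*R ≤ cτ := by
        nlinarith only [hcosτ, hmP_lo, hm4real, hR4]
      have hcτ_up : cτ ≤ 4*(m:ℝ)*R := by
        nlinarith only [hcosτ, hmP_up, hmpos, hR]
      have hsτ_le : sτ ≤ cτ := by
        rw [hsτdef, hcτdef]
        linarith only [Real.cosh_sub_sinh τ, Real.exp_pos (-τ)]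
      have hcτ2 : (2:ℝ) ≤ cτ := by nlinarith only [hcτ_lo, hm4real, hR4]
      have hsτ_ge : cτ/2 ≤ sτ := by
        have h := Real.cosh_sq_sub_sinh_sq τ
        rw [← hsτdef, ← hcτdef] at h
        nlinarith only [hsτpos, hcτ2, h]
      have hlogsτ_up : Real.log sτ ≤ 2 + lm + Real.log R := by
        have h1' : Real.log sτ ≤ Real.log (4*(m:ℝ)*R) :=
          Real.log_le_log hsτpos (le_trans hsτ_le hcτ_up)
        rw [Real.log_mul (by positivity) (ne_of_gt hR),
          Real.log_mul (by norm_num) (ne_of_gt hmpos), ← hlmdef] at h1'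
        linarith only [h1', hlog4le2]
      have hlogsτ_lo : lm + Real.log R ≤ Real.log sτ := by
        have h1' : (m:ℝ)*R ≤ sτ := by linarith only [hsτ_ge, hcτ_lo]
        have h2' : Real.log ((m:ℝ)*R) ≤ Real.log sτ := Real.log_le_log (by positivity) h1'
        rwa [Real.log_mul (ne_of_gt hmpos) (ne_of_gt hR), ← hlmdef] at h2'
      have hlogs2_up : Real.log s2 ≤ 2*R := by
        have hs : s2 ≤ C2 := by
          rw [hs2def, hC2def]
          linarith only [Real.cosh_sub_sinh (2*R), Real.exp_pos (-(2*R))]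
        have h1' := Real.log_le_log hs2pos hs
        linarith only [h1', hlogC2le]
      have hlogs2_lo : 2*R - 2 ≤ Real.log s2 := by
        have hexp2R : (2:ℝ) ≤ Real.exp (2*R) := by
          have h := Real.add_one_le_exp (2*R)
          linarith only [h, hR4]
        have h1' : Real.exp (2*R) / 4 ≤ s2 := by
          rw [hs2def, Real.sinh_eq]
          have hneg : Real.exp (-(2*R)) ≤ 1 := Real.exp_le_one_iff.2 (by linarith only [hR4])
          linarith only [hneg, hexp2R]
        have h2' := Real.log_le_log (by positivity) h1'
        rw [Real.log_div (by positivity) (by norm_num), Real.log_exp] at h2'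
        linarith only [h2', hlog4le2]
      have hlmleR : lm ≤ Real.log R := by
        have h := Real.log_le_log hmpos hcase
        rw [← hlmdef] at h
        exact h
      have hR1 : (1:ℝ) ≤ R := by linarith only [hR4]
      have hlogRle : Real.log R ≤ 2*Real.sqrt R := log_le_two_sqrt hR1
      have hδup : L - S ≤ (3/2)*lm + Real.log R + 4 := by
        linarith only [hL_id, hSdef, hlogC2le, hlogs2_lo, hlogsτ_up]
      have hlogRnn : 0 ≤ Real.log R := Real.log_nonneg hR1
      have hδlo : 0 ≤ L - S := by
        linarith only [hL_id, hSdef, hP_lo, hlogs2_up, hlogsτ_lo, hlm4, hlogRnn]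
      have hLgeR : R ≤ L := by
        linarith only [hL_id, hP_lo, hlm4, hR1]
      have hsqR : 200/ε' ≤ Real.sqrt R := le_trans hsqm (Real.sqrt_le_sqrt hcase)
      have hsqR200 : (200:ℝ) ≤ Real.sqrt R := le_trans hA1 hsqR
      have hq : 200 ≤ ε' * Real.sqrt R := by
        rw [div_le_iff₀ hε'pos] at hsqR
        linarith only [hsqR]
      have hRsq : R = Real.sqrt R * Real.sqrt R :=
        (Real.mul_self_sqrt (by linarith only [hR1])).symm
      rw [abs_sub_comm, abs_of_nonneg hδlo]
      have h6 : L - S ≤ 6*Real.sqrt R := by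
        linarith only [hδup, hlmleR, hlogRle, hsqR200]
      have hprod : 200*Real.sqrt R ≤ ε' * R := by
        have h := mul_le_mul_of_nonneg_right hq (Real.sqrt_nonneg R)
        calc 200 * Real.sqrt R ≤ ε' * Real.sqrt R * Real.sqrt R := h
          _ = ε' * (Real.sqrt R * Real.sqrt R) := by ring
          _ = ε' * R := by rw [← hRsq]
      have hprod2 : ε' * R ≤ ε' * L := mul_le_mul_of_nonneg_left hLgeR hε'pos.le
      linarith only [h6, hprod, hprod2, Real.sqrt_nonneg R]
  -- final assembly
  rw [hgoal_eq]
  have habs : |(-(4*lm) + K) - (m:ℝ)*L| ≤ |K - (m:ℝ)*S| + (m:ℝ)*|S - L| + 4*lm := by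
    have h1' : (-(4*lm) + K) - (m:ℝ)*L = (K - (m:ℝ)*S) + (m:ℝ)*(S - L) + (-(4*lm)) := by ring
    rw [h1']
    calc |(K - (m:ℝ)*S) + (m:ℝ)*(S - L) + (-(4*lm))|
        ≤ |(K - (m:ℝ)*S) + (m:ℝ)*(S - L)| + |(-(4*lm))| := abs_add_le _ _
      _ ≤ |K - (m:ℝ)*S| + |(m:ℝ)*(S - L)| + |(-(4*lm))| := by
          linarith only [abs_add_le (K - (m:ℝ)*S) ((m:ℝ)*(S - L))]
      _ = |K - (m:ℝ)*S| + (m:ℝ)*|S - L| + 4*lm := by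
          rw [abs_mul, abs_neg, abs_of_nonneg hmpos.le, abs_of_nonneg (by linarith : (0:ℝ) ≤ 4*lm)]
  have hKS : |K - (m:ℝ)*S| ≤ L + lm + 4 := by
    rw [abs_le]
    constructor <;> linarith only [hKu, hKl]
  have hmSL : (m:ℝ)*|S - L| ≤ (ε'/2) * ((m:ℝ)*L) := by
    have h := mul_le_mul_of_nonneg_left hSL hmpos.le
    calc (m:ℝ)*|S - L| ≤ (m:ℝ)*(ε'/2 * L) := h
      _ = (ε'/2) * ((m:ℝ)*L) := by ring
  have hfinal : L + lm + 4 + 4*lm ≤ (ε'/2) * ((m:ℝ)*L) := by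
    have hlm2L : lm ≤ 2*L := by linarith only [hL_ge]
    have hL20000 : (20000:ℝ) ≤ L := by linarith only [hL_ge, hlm4]
    have hprod : 40000*L ≤ (ε'*m)*L := mul_le_mul_of_nonneg_right hεm hLpos.le
    linarith only [hlm2L, hL20000, hprod]
  have hε'bound : |(-(4*lm) + K) - (m:ℝ)*L| ≤ ε' * ((m:ℝ)*L) := by
    calc |(-(4*lm) + K) - (m:ℝ)*L| ≤ |K - (m:ℝ)*S| + (m:ℝ)*|S - L| + 4*lm := habs
      _ ≤ (L + lm + 4) + (ε'/2) * ((m:ℝ)*L) + 4*lm := by linarith only [hKS, hmSL]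
      _ ≤ (ε'/2) * ((m:ℝ)*L) + (ε'/2) * ((m:ℝ)*L) := by linarith only [hfinal]
      _ = ε' * ((m:ℝ)*L) := by ring
  calc |(-(4*lm) + K) - (m:ℝ)*L| ≤ ε' * ((m:ℝ)*L) := hε'bound
    _ ≤ ε * ((m:ℝ)*L) := by
        apply mul_le_mul_of_nonneg_right hε'leε
        positivity
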